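/- S 0 = 1 (the identity matrix), and for every real p one has S (-p) * S p = 1 = S p * S (-p); in particular every S p is a unit of the 3×3 matrix ring over Λ with inverse S (-p). (Parts (ii) and (iii) of the lemma that the matrices S(2pη) form a group.) -/

import Mathlib

noncomputable section

abbrev Λ : Type := ExteriorAlgebra ℂ (Fin 2 → ℂ)

def η : Λ := ExteriorAlgebra.ι ℂ (Pi.single 0 1)

def η' : Λ := ExteriorAlgebra.ι ℂ (Pi.single 1 1)

def E : Λ := η * η'

def S (p : ℝ) : Matrix (Fin 3) (Fin 3) Λ :=
  !![1 + ((p ^ 2 / 2 : ℝ) : ℂ) • E, 0, -((p : ℂ) • η');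
     0, 1 + ((p ^ 2 / 2 : ℝ) : ℂ) • E, -((p : ℂ) • η);
     (p : ℂ) • η, -((p : ℂ) • η'), 1 - ((p ^ 2 : ℝ) : ℂ) • E]

lemma hηη : η * η = 0 := ExteriorAlgebra.ι_sq_zero _
lemma hη'η' : η' * η' = 0 := ExteriorAlgebra.ι_sq_zero _
lemma hη'η : η' * η = -E := by
  have h := ExteriorAlgebra.ι_add_mul_swap (R := ℂ) (Pi.single 0 1) (Pi.single 1 1 : Fin 2 → ℂ)
  rw [eq_neg_iff_add_eq_zero, E, add_comm]
  exact h
lemma hηE : η * E = 0 := by rw [E, ← mul_assoc, hηη, zero_mul]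
lemma hEη : E * η = 0 := by rw [E, mul_assoc, hη'η, mul_neg, hηE, neg_zero]
lemma hEη' : E * η' = 0 := by rw [E, mul_assoc, hη'η', mul_zero]
lemma hη'E : η' * E = 0 := by rw [E, ← mul_assoc, hη'η, neg_mul, hEη', neg_zero]
lemma hEE : E * E = 0 := by
  nth_rewrite 2 [show E = η * η' from rfl]
  rw [← mul_assoc, hEη, zero_mul]

lemma S_zero : S 0 = 1 := by
  rw [show (1 : Matrix (Fin 3) (Fin 3) Λ) = !![1,0,0;0,1,0;0,0,1] from Matrix.one_fin_three]
  simp [S]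

lemma S_add (p q : ℝ) : S p * S q = S (p + q) := by
  simp only [S, Matrix.mul_fin_three]
  refine congrArg Matrix.of ?_
  simp only [Matrix.vecCons, Fin.cons_inj, eq_self_iff_true, and_true]
  refine ⟨⟨?_, ?_, ?_⟩, ⟨?_, ?_, ?_⟩, ?_, ?_, ?_⟩ <;>
  · simp only [mul_add, add_mul, mul_neg, neg_mul, mul_one, one_mul, mul_sub, sub_mul,
      smul_mul_assoc, mul_smul_comm, hηη, hη'η', hη'η, hEE, hηE, hEη, hη'E, hEη',
      smul_zero, smul_neg, neg_neg, neg_zero, add_zero, zero_add, smul_smul, zero_mul,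
      mul_zero, show η * η' = E from rfl]
    try (match_scalars; all_goals (push_cast; ring))

theorem S_identity_and_inverses :
    S 0 = 1 ∧
    (∀ p : ℝ, S (-p) * S p = 1 ∧ S p * S (-p) = 1) ∧
    (∀ p : ℝ, ∃ u : (Matrix (Fin 3) (Fin 3) Λ)ˣ, u.val = S p ∧ (u⁻¹).val = S (-p)) := by
  have hinv : ∀ p : ℝ, S (-p) * S p = 1 ∧ S p * S (-p) = 1 := by
    intro p
    constructor <;> rw [S_add] <;> simp [S_zero]
  refine ⟨S_zero, hinv, fun p => ?_⟩
  exact ⟨⟨S p, S (-p), (hinv p).2, (hinv p).1⟩, rfl, rfl⟩
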